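/- For every r with 0 < r ≤ 1, the function z ↦ ν(z, r) is a probability density on ℝ, i.e., ∫_{ℝ} ν(z, r) dz = 1. -/

import Mathlib

open MeasureTheory

/-- The density `ν(z, r)` of the highest position of an F-PCSA subsketch:
`ν(z, r) = (1 − e^{−2^{−z}}) r ∏_{j=1}^∞ (1 − (1 − e^{−2^{−z−j}}) r)`. -/
noncomputable def nu (z r : ℝ) : ℝ :=
  (1 - Real.exp (-(2:ℝ) ^ (-z))) * r *
    ∏' j : ℕ, (1 - (1 - Real.exp (-(2:ℝ) ^ (-z - ((j : ℝ) + 1)))) * r)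

open Real Filter Set Topology


noncomputable def fct (r z : ℝ) : ℝ := 1 - (1 - Real.exp (-(2:ℝ) ^ (-z))) * r

lemma two_rpow_pos (z : ℝ) : 0 < (2:ℝ) ^ (-z) := Real.rpow_pos_of_pos two_pos _

lemma fct_le_one {r : ℝ} (hr0 : 0 ≤ r) (z : ℝ) : fct r z ≤ 1 := by
  have h1 : Real.exp (-(2:ℝ) ^ (-z)) ≤ 1 :=
    Real.exp_le_one_iff.mpr (neg_nonpos_of_nonneg (two_rpow_pos z).le)
  unfold fct; nlinarith

lemma exp_le_fct {r : ℝ} (hr1 : r ≤ 1) (z : ℝ) : Real.exp (-(2:ℝ) ^ (-z)) ≤ fct r z := by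
  have h1 : Real.exp (-(2:ℝ) ^ (-z)) ≤ 1 :=
    Real.exp_le_one_iff.mpr (neg_nonpos_of_nonneg (two_rpow_pos z).le)
  unfold fct; nlinarith

lemma fct_pos {r : ℝ} (hr1 : r ≤ 1) (z : ℝ) : 0 < fct r z :=
  lt_of_lt_of_le (Real.exp_pos _) (exp_le_fct hr1 z)

lemma log_fct_nonpos {r : ℝ} (hr0 : 0 ≤ r) (hr1 : r ≤ 1) (z : ℝ) : Real.log (fct r z) ≤ 0 :=
  Real.log_nonpos (fct_pos hr1 z).le (fct_le_one hr0 z)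

lemma neg_log_fct_le {r : ℝ} (hr1 : r ≤ 1) (z : ℝ) : -Real.log (fct r z) ≤ (2:ℝ) ^ (-z) := by
  have := Real.log_le_log (Real.exp_pos _) (exp_le_fct hr1 z)
  rw [Real.log_exp] at this; linarith

lemma rpow_decomp (z : ℝ) (j : ℕ) : (2:ℝ) ^ (-(z + j)) = (2:ℝ) ^ (-z) * (2⁻¹ : ℝ) ^ j := by
  rw [neg_add, Real.rpow_add two_pos, Real.rpow_neg two_pos.le (j:ℝ), Real.rpow_natCast, inv_pow]

lemma summable_neg_log {r : ℝ} (hr0 : 0 ≤ r) (hr1 : r ≤ 1) (z : ℝ) :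
    Summable (fun j : ℕ => -Real.log (fct r (z + j))) := by
  apply Summable.of_nonneg_of_le
    (fun (j:ℕ) => neg_nonneg.2 (log_fct_nonpos hr0 hr1 _))
    (fun (j:ℕ) => (neg_log_fct_le hr1 (z + j)).trans (rpow_decomp z j).le)
  exact (summable_geometric_of_lt_one (by norm_num) (by norm_num)).mul_left _

lemma summable_log {r : ℝ} (hr0 : 0 ≤ r) (hr1 : r ≤ 1) (z : ℝ) :
    Summable (fun j : ℕ => Real.log (fct r (z + j))) := by
  simpa using (summable_neg_log hr0 hr1 z).neg

noncomputable def Lr (r z : ℝ) : ℝ := ∑' j : ℕ, Real.log (fct r (z + j))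

noncomputable def Fr (r z : ℝ) : ℝ := Real.exp (Lr r z)

lemma hasProd_Fr {r : ℝ} (hr0 : 0 ≤ r) (hr1 : r ≤ 1) (z : ℝ) :
    HasProd (fun j : ℕ => fct r (z + j)) (Fr r z) := by
  have h := (summable_log hr0 hr1 z).hasSum.rexp
  have e : (Real.exp ∘ fun j : ℕ => Real.log (fct r (z + j))) = fun j : ℕ => fct r (z + j) :=
    funext fun j => Real.exp_log (fct_pos hr1 _)
  rwa [e] at h

lemma tprod_Fr {r : ℝ} (hr0 : 0 ≤ r) (hr1 : r ≤ 1) (z : ℝ) :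
    ∏' j : ℕ, fct r (z + j) = Fr r z := (hasProd_Fr hr0 hr1 z).tprod_eq

lemma Fr_pos (r z : ℝ) : 0 < Fr r z := Real.exp_pos _

lemma Lr_nonpos {r : ℝ} (hr0 : 0 ≤ r) (hr1 : r ≤ 1) (z : ℝ) : Lr r z ≤ 0 :=
  tsum_nonpos (fun j => log_fct_nonpos hr0 hr1 _)

lemma Fr_le_one {r : ℝ} (hr0 : 0 ≤ r) (hr1 : r ≤ 1) (z : ℝ) : Fr r z ≤ 1 :=
  Real.exp_le_one_iff.mpr (Lr_nonpos hr0 hr1 z)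

set_option maxHeartbeats 1000000 in
lemma Lr_rec {r : ℝ} (hr0 : 0 ≤ r) (hr1 : r ≤ 1) (z : ℝ) :
    Lr r z = Real.log (fct r z) + Lr r (z + 1) := by
  have h := Summable.tsum_eq_zero_add (summable_log hr0 hr1 z)
  unfold Lr
  rw [h]
  congr 1
  · norm_num
  · apply tsum_congr; intro j; congr 1; push_cast; ring

lemma Fr_rec {r : ℝ} (hr0 : 0 ≤ r) (hr1 : r ≤ 1) (z : ℝ) :
    Fr r z = fct r z * Fr r (z + 1) := by
  unfold Fr
  rw [Lr_rec hr0 hr1 z, Real.exp_add, Real.exp_log (fct_pos hr1 z)]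

lemma fct_def (r z : ℝ) : fct r z = 1 - (1 - Real.exp (-(2:ℝ) ^ (-z))) * r := rfl

/-- Lower bound: `exp (-2^{-z} * 2) ≤ Fr r z`. -/
lemma Fr_ge {r : ℝ} (hr0 : 0 ≤ r) (hr1 : r ≤ 1) (z : ℝ) :
    Real.exp (-((2:ℝ) ^ (-z) * 2)) ≤ Fr r z := by
  have hsum : Summable (fun j : ℕ => (2:ℝ) ^ (-z) * (2⁻¹:ℝ) ^ j) :=
    (summable_geometric_of_lt_one (by norm_num) (by norm_num)).mul_left _
  have h1 : ∑' j : ℕ, -Real.log (fct r (z + j)) ≤ (2:ℝ) ^ (-z) * 2 := by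
    have := Summable.tsum_le_tsum (f := fun j : ℕ => -Real.log (fct r (z + j)))
      (g := fun j : ℕ => (2:ℝ) ^ (-z) * (2⁻¹:ℝ) ^ j)
      (fun j => (neg_log_fct_le hr1 (z + j)).trans (rpow_decomp z j).le)
      (summable_neg_log hr0 hr1 z) hsum
    calc ∑' j : ℕ, -Real.log (fct r (z + j)) ≤ ∑' j : ℕ, (2:ℝ) ^ (-z) * (2⁻¹:ℝ) ^ j := this
    _ = (2:ℝ) ^ (-z) * ∑' j : ℕ, (2⁻¹:ℝ) ^ j := tsum_mul_left
    _ = (2:ℝ) ^ (-z) * 2 := by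
        rw [tsum_geometric_of_lt_one (by norm_num) (by norm_num)]; norm_num
  have h2 : -((2:ℝ) ^ (-z) * 2) ≤ Lr r z := by
    rw [Lr, ← neg_neg (∑' j : ℕ, Real.log (fct r (z + j))), ← tsum_neg]
    linarith
  exact Real.exp_le_exp.mpr h2

noncomputable def qq (r : ℝ) : ℝ := 1 - (1 - Real.exp (-1)) * r

lemma qq_pos {r : ℝ} (hr1 : r ≤ 1) : 0 < qq r := by
  have h := Real.exp_pos (-1:ℝ)
  have h2 : Real.exp (-1:ℝ) ≤ 1 := Real.exp_le_one_iff.mpr (by norm_num)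
  unfold qq; nlinarith

lemma log_qq_neg {r : ℝ} (hr0 : 0 < r) (hr1 : r ≤ 1) : Real.log (qq r) < 0 := by
  apply Real.log_neg (qq_pos hr1)
  have h2 : Real.exp (-1:ℝ) < 1 := by
    rw [Real.exp_lt_one_iff]; norm_num
  unfold qq; nlinarith

lemma fct_le_qq {r : ℝ} (hr0 : 0 ≤ r) (hz : z ≤ 0) : fct r z ≤ qq r := by
  have h1 : (1:ℝ) ≤ (2:ℝ) ^ (-z) := by
    rw [show (1:ℝ) = (2:ℝ) ^ (0:ℝ) by norm_num]
    exact Real.rpow_le_rpow_left_iff (by norm_num) |>.mpr (by linarith)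
  have h2 : Real.exp (-(2:ℝ)^(-z)) ≤ Real.exp (-1) := Real.exp_le_exp.mpr (by linarith)
  rw [fct_def]; unfold qq; nlinarith

/-- Upper bound for nonpositive `z`. -/
lemma Fr_le_exp {r : ℝ} (hr0 : 0 < r) (hr1 : r ≤ 1) (hz : z ≤ 0) :
    Fr r z ≤ Real.exp ((-z - 1) * Real.log (qq r)) := by
  set K : ℕ := ⌊-z⌋₊ with hK
  have hKz : (K:ℝ) ≤ -z := Nat.floor_le (by linarith)
  have hKz' : -z - 1 ≤ (K:ℝ) := by
    have := Nat.lt_floor_add_one (-z); linarith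
  have hL : Lr r z ≤ ∑ j ∈ Finset.range K, Real.log (fct r (z + j)) := by
    have h := Summable.sum_le_tsum (Finset.range K)
      (fun j _ => neg_nonneg.2 (log_fct_nonpos hr0.le hr1 (z + j)))
      (summable_neg_log hr0.le hr1 z)
    rw [tsum_neg] at h
    rw [Lr]
    have : -(∑' j : ℕ, Real.log (fct r (z + j))) ≥ ∑ j ∈ Finset.range K, -Real.log (fct r (z + j)) := h
    rw [Finset.sum_neg_distrib] at this
    linarith
  have hsum : ∑ j ∈ Finset.range K, Real.log (fct r (z + j)) ≤ (K:ℝ) * Real.log (qq r) := by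
    calc ∑ j ∈ Finset.range K, Real.log (fct r (z + j))
        ≤ ∑ _j ∈ Finset.range K, Real.log (qq r) := by
          apply Finset.sum_le_sum
          intro j hj
          apply Real.log_le_log (fct_pos hr1 _)
          apply fct_le_qq hr0.le
          have hj' : (j:ℝ) < K := by exact_mod_cast Finset.mem_range.mp hj
          linarith
      _ = (K:ℝ) * Real.log (qq r) := by
          rw [Finset.sum_const, Finset.card_range, nsmul_eq_mul]
  have hfin : Lr r z ≤ (-z - 1) * Real.log (qq r) := by
    have h3 : (K:ℝ) * Real.log (qq r) ≤ (-z - 1) * Real.log (qq r) :=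
      mul_le_mul_of_nonpos_right hKz' (log_qq_neg hr0 hr1).le
    linarith
  exact Real.exp_le_exp.mpr hfin

lemma continuous_fct (r : ℝ) : Continuous (fun z => fct r z) := by
  have h : (fun z => fct r z) =
      fun z => 1 - (1 - Real.exp (-Real.exp (Real.log 2 * (-z)))) * r := by
    funext z
    rw [fct, Real.rpow_def_of_pos two_pos]
  rw [h]
  fun_prop

lemma measurable_Lr {r : ℝ} (hr0 : 0 ≤ r) (hr1 : r ≤ 1) : Measurable (Lr r) := by
  apply measurable_of_tendsto_metrizable
    (f := fun n z => ∑ j ∈ Finset.range n, Real.log (fct r (z + j)))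
  · intro n
    apply Finset.measurable_sum
    intro j _
    apply Measurable.log
    exact (continuous_fct r).measurable.comp (measurable_id.add_const _)
  · rw [tendsto_pi_nhds]
    intro z
    exact (summable_log hr0 hr1 z).hasSum.tendsto_sum_nat

lemma measurable_Fr {r : ℝ} (hr0 : 0 ≤ r) (hr1 : r ≤ 1) : Measurable (Fr r) :=
  Real.measurable_exp.comp (measurable_Lr hr0 hr1)


lemma integrableOn_exp_mul_Iic' {c : ℝ} (hc : 0 < c) (a : ℝ) :
    IntegrableOn (fun z => Real.exp (c * z)) (Iic a) := by
  have h : Integrable ((Iic (c * a)).indicator Real.exp) := by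
    rw [integrable_indicator_iff measurableSet_Iic]
    exact integrableOn_exp_Iic (c * a)
  have h2 : Integrable (fun z => (Iic (c * a)).indicator Real.exp (c * z)) :=
    (integrable_comp_mul_left_iff _ hc.ne').mpr h
  apply (integrable_indicator_iff measurableSet_Iic).mp
  apply h2.congr
  filter_upwards with z
  by_cases hz : z ≤ a
  · rw [Set.indicator_of_mem (by simpa using hz : z ∈ Iic a),
      Set.indicator_of_mem (by simpa using (mul_le_mul_of_nonneg_left hz hc.le) : c * z ∈ Iic (c*a))]
  · rw [Set.indicator_of_notMem (by simp only [mem_Iic, not_le] at hz ⊢; exact (mul_lt_mul_iff_right₀ hc).mpr hz),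
      Set.indicator_of_notMem (by simpa using hz)]

lemma intervalIntegrable_of_bounded {f : ℝ → ℝ} (hm : Measurable f)
    (h0 : ∀ z, 0 ≤ f z) (h1 : ∀ z, f z ≤ 1) (a b : ℝ) :
    IntervalIntegrable f volume a b := by
  rw [intervalIntegrable_iff]
  apply Integrable.mono' (g := fun _ => (1:ℝ))
  · exact integrableOn_const measure_Ioc_lt_top.ne
  · exact hm.aestronglyMeasurable.restrict
  · filter_upwards with z
    rw [Real.norm_eq_abs, abs_of_nonneg (h0 z)]
    exact h1 z

section
variable {r : ℝ}

lemma Fr_mono_step (hr0 : 0 ≤ r) (hr1 : r ≤ 1) (z : ℝ) : Fr r z ≤ Fr r (z + 1) := by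
  rw [Fr_rec hr0 hr1 z]
  nlinarith [Fr_pos r (z + 1), fct_le_one hr0 z, fct_pos hr1 z]

lemma diff_le_exp_all (hr0 : 0 < r) (hr1 : r ≤ 1) (z : ℝ) :
    Fr r (z + 1) - Fr r z ≤ Real.exp (-Real.log 2 * z) := by
  have h1 : Fr r (z + 1) - Fr r z = (1 - fct r z) * Fr r (z + 1) := by
    rw [Fr_rec hr0.le hr1 z]; ring
  have h2 : (1 - fct r z) ≤ (2:ℝ) ^ (-z) := by
    rw [fct_def]
    have := Real.add_one_le_exp (-(2:ℝ) ^ (-z))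
    nlinarith [two_rpow_pos z, Real.exp_pos (-(2:ℝ) ^ (-z))]
  have h3 : (2:ℝ) ^ (-z) = Real.exp (-Real.log 2 * z) := by
    rw [Real.rpow_def_of_pos two_pos]; ring_nf
  have h4 : (0:ℝ) ≤ 1 - fct r z := by linarith [fct_le_one hr0.le z]
  calc Fr r (z + 1) - Fr r z = (1 - fct r z) * Fr r (z + 1) := h1
    _ ≤ (1 - fct r z) * 1 := by
        have := Fr_le_one hr0.le hr1 (z + 1); nlinarith
    _ = 1 - fct r z := mul_one _
    _ ≤ (2:ℝ) ^ (-z) := h2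
    _ = Real.exp (-Real.log 2 * z) := h3

lemma diff_le_exp_neg (hr0 : 0 < r) (hr1 : r ≤ 1) {z : ℝ} (hz : z ≤ -1) :
    Fr r (z + 1) - Fr r z ≤ Real.exp ((-Real.log (qq r)) * z) * Real.exp (2 * (-Real.log (qq r))) := by
  have h1 : Fr r (z + 1) - Fr r z ≤ Fr r (z + 1) := by linarith [Fr_pos r z]
  have h2 : Fr r (z + 1) ≤ Real.exp ((-(z+1) - 1) * Real.log (qq r)) :=
    Fr_le_exp hr0 hr1 (by linarith)
  have h3 : Real.exp ((-(z+1) - 1) * Real.log (qq r))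
      = Real.exp ((-Real.log (qq r)) * z) * Real.exp (2 * (-Real.log (qq r))) := by
    rw [← Real.exp_add]; ring_nf
  linarith [h3 ▸ h2]

lemma integrable_diff (hr0 : 0 < r) (hr1 : r ≤ 1) :
    Integrable (fun z => Fr r (z + 1) - Fr r z) := by
  set c : ℝ := -Real.log (qq r) with hc
  have hcpos : 0 < c := by simp only [hc]; linarith [log_qq_neg hr0 hr1]
  have hmeas : Measurable (fun z => Fr r (z + 1) - Fr r z) :=
    ((measurable_Fr hr0.le hr1).comp (measurable_id.add_const 1)).sub (measurable_Fr hr0.le hr1)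
  have hnn : ∀ z, 0 ≤ Fr r (z + 1) - Fr r z := fun z => by
    linarith [Fr_mono_step hr0.le hr1 z]
  rw [← integrableOn_univ, ← Iic_union_Ioi (a := (-1:ℝ))]
  apply IntegrableOn.union
  · apply Integrable.mono' (g := fun z => Real.exp (c * z) * Real.exp (2 * c))
    · exact (integrableOn_exp_mul_Iic' hcpos (-1)).mul_const _
    · exact hmeas.aestronglyMeasurable.restrict
    · rw [ae_restrict_iff' measurableSet_Iic]
      filter_upwards with z hz
      rw [Real.norm_eq_abs, abs_of_nonneg (hnn z)]
      rw [hc]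
      exact diff_le_exp_neg hr0 hr1 (mem_Iic.mp hz)
  · apply Integrable.mono' (g := fun z => Real.exp (-Real.log 2 * z))
    · exact exp_neg_integrableOn_Ioi (-1) (Real.log_pos one_lt_two)
    · exact hmeas.aestronglyMeasurable.restrict
    · rw [ae_restrict_iff' measurableSet_Ioi]
      filter_upwards with z _
      rw [Real.norm_eq_abs, abs_of_nonneg (hnn z)]
      exact diff_le_exp_all hr0 hr1 z

end

lemma nu_eq {r : ℝ} (hr0 : 0 ≤ r) (hr1 : r ≤ 1) (z : ℝ) :
    nu z r = Fr r (z + 1) - Fr r z := by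
  have h1 : (∏' j : ℕ, (1 - (1 - Real.exp (-(2:ℝ) ^ (-z - ((j : ℝ) + 1)))) * r))
      = Fr r (z + 1) := by
    rw [← tprod_Fr hr0 hr1 (z + 1)]
    apply tprod_congr
    intro j
    rw [fct_def]
    congr 3
    ring
  rw [nu, h1, Fr_rec hr0 hr1 z, fct_def]
  ring

/-- For `0 < r ≤ 1`, `z ↦ ν(z, r)` is a probability density on `ℝ`. -/
theorem stmt_4 (r : ℝ) (hr0 : 0 < r) (hr1 : r ≤ 1) :
    ∫ z : ℝ, nu z r = 1 := by
  have hII : ∀ a b : ℝ, IntervalIntegrable (Fr r) volume a b :=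
    intervalIntegrable_of_bounded (measurable_Fr hr0.le hr1)
      (fun z => (Fr_pos r z).le) (Fr_le_one hr0.le hr1)
  have hII' : ∀ a b : ℝ, IntervalIntegrable (fun z => Fr r (z + 1)) volume a b :=
    intervalIntegrable_of_bounded
      ((measurable_Fr hr0.le hr1).comp (measurable_id.add_const 1))
      (fun z => (Fr_pos r _).le) (fun z => Fr_le_one hr0.le hr1 _)
  -- the interval integral telescopes
  have key : ∀ n : ℕ, (∫ z in (-(n:ℝ))..(n:ℝ), nu z r)
      = (∫ z in (n:ℝ)..((n:ℝ)+1), Fr r z) - ∫ z in (-(n:ℝ))..(-(n:ℝ)+1), Fr r z := by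
    intro n
    have e1 : (∫ z in (-(n:ℝ))..(n:ℝ), nu z r)
        = ∫ z in (-(n:ℝ))..(n:ℝ), (Fr r (z + 1) - Fr r z) :=
      intervalIntegral.integral_congr (fun z _ => nu_eq hr0.le hr1 z)
    rw [e1, intervalIntegral.integral_sub (hII' _ _) (hII _ _),
      intervalIntegral.integral_comp_add_right (Fr r) 1]
    have h1 := intervalIntegral.integral_add_adjacent_intervals
      (hII (-(n:ℝ)) (-(n:ℝ)+1)) (hII (-(n:ℝ)+1) ((n:ℝ)+1))
    have h2 := intervalIntegral.integral_add_adjacent_intervals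
      (hII (-(n:ℝ)) (n:ℝ)) (hII (n:ℝ) ((n:ℝ)+1))
    linarith
  -- right piece tends to 1
  have limC : Tendsto (fun n : ℕ => ∫ z in (n:ℝ)..((n:ℝ)+1), Fr r z) atTop (𝓝 1) := by
    have hlow : ∀ n : ℕ, Real.exp (-((2:ℝ) ^ (-(n:ℝ)) * 2))
        ≤ ∫ z in (n:ℝ)..((n:ℝ)+1), Fr r z := by
      intro n
      have := intervalIntegral.integral_mono_on (a := (n:ℝ)) (b := (n:ℝ)+1)
        (f := fun _ => Real.exp (-((2:ℝ) ^ (-(n:ℝ)) * 2))) (g := Fr r)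
        (by linarith) intervalIntegrable_const (hII _ _) ?_
      · simpa using this
      · intro z hz
        refine le_trans ?_ (Fr_ge hr0.le hr1 z)
        apply Real.exp_le_exp.mpr
        have h2 : (2:ℝ) ^ (-z) ≤ (2:ℝ) ^ (-(n:ℝ)) :=
          (Real.rpow_le_rpow_left_iff one_lt_two).mpr (by have := hz.1; linarith)
        nlinarith
    have hup : ∀ n : ℕ, (∫ z in (n:ℝ)..((n:ℝ)+1), Fr r z) ≤ 1 := by
      intro n
      have := intervalIntegral.integral_mono_on (a := (n:ℝ)) (b := (n:ℝ)+1)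
        (f := Fr r) (g := fun _ => (1:ℝ))
        (by linarith) (hII _ _) intervalIntegrable_const
        (fun z _ => Fr_le_one hr0.le hr1 z)
      simpa using this
    have hlim : Tendsto (fun n : ℕ => Real.exp (-((2:ℝ) ^ (-(n:ℝ)) * 2))) atTop (𝓝 1) := by
      have h0 : Tendsto (fun n : ℕ => (2:ℝ) ^ (-(n:ℝ))) atTop (𝓝 0) := by
        have : ∀ n : ℕ, (2:ℝ) ^ (-(n:ℝ)) = (2⁻¹:ℝ) ^ n := by
          intro n; simpa using rpow_decomp 0 n
        simp only [this]
        exact tendsto_pow_atTop_nhds_zero_of_lt_one (by norm_num) (by norm_num)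
      have := (Real.continuous_exp.tendsto (-(0 * 2:ℝ))).comp ((h0.mul_const 2).neg)
      simpa [Function.comp_def] using this
    exact tendsto_of_tendsto_of_tendsto_of_le_of_le hlim tendsto_const_nhds hlow hup
  -- left piece tends to 0
  have limA : Tendsto (fun n : ℕ => ∫ z in (-(n:ℝ))..(-(n:ℝ)+1), Fr r z) atTop (𝓝 0) := by
    have hlow : ∀ n : ℕ, 0 ≤ ∫ z in (-(n:ℝ))..(-(n:ℝ)+1), Fr r z := by
      intro n
      apply intervalIntegral.integral_nonneg (by linarith)
      exact fun z _ => (Fr_pos r z).le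
    have hup : ∀ n : ℕ, 1 ≤ n → (∫ z in (-(n:ℝ))..(-(n:ℝ)+1), Fr r z)
        ≤ Real.exp (((n:ℝ) - 2) * Real.log (qq r)) := by
      intro n hn
      have hn' : (1:ℝ) ≤ (n:ℝ) := by exact_mod_cast hn
      have := intervalIntegral.integral_mono_on (a := -(n:ℝ)) (b := -(n:ℝ)+1)
        (f := Fr r) (g := fun _ => Real.exp (((n:ℝ) - 2) * Real.log (qq r)))
        (by linarith) (hII _ _) intervalIntegrable_const ?_
      · simpa using this
      · intro z hz
        refine le_trans (Fr_le_exp hr0 hr1 (by have := hz.2; linarith)) ?_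
        apply Real.exp_le_exp.mpr
        have hlq := log_qq_neg hr0 hr1
        have : (n:ℝ) - 2 ≤ -z - 1 := by have := hz.2; linarith
        nlinarith
    have hlim : Tendsto (fun n : ℕ => Real.exp (((n:ℝ) - 2) * Real.log (qq r))) atTop (𝓝 0) := by
      apply Real.tendsto_exp_atBot.comp
      apply Tendsto.atTop_mul_const_of_neg (log_qq_neg hr0 hr1)
      exact tendsto_atTop_add_const_right _ _ tendsto_natCast_atTop_atTop
    apply tendsto_of_tendsto_of_tendsto_of_le_of_le' tendsto_const_nhds hlim
      (Eventually.of_forall hlow)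
      (eventually_atTop.mpr ⟨1, hup⟩)
  have hlim2 : Tendsto (fun n : ℕ => ∫ z in (-(n:ℝ))..(n:ℝ), nu z r) atTop (𝓝 1) := by
    have := limC.sub limA
    rw [sub_zero] at this
    exact this.congr (fun n => (key n).symm)
  have hint : Integrable (fun z => nu z r) := by
    have := integrable_diff hr0 hr1
    apply this.congr
    filter_upwards with z
    exact (nu_eq hr0.le hr1 z).symm
  have hlim1 : Tendsto (fun n : ℕ => ∫ z in (-(n:ℝ))..(n:ℝ), nu z r) atTop
      (𝓝 (∫ z : ℝ, nu z r)) :=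
    intervalIntegral_tendsto_integral hint
      (tendsto_neg_atTop_atBot.comp tendsto_natCast_atTop_atTop) tendsto_natCast_atTop_atTop
  exact tendsto_nhds_unique hlim1 hlim2
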